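/- Suppose cos θ0 = sin θ0 · sin θ1 and sin θ1 ≠ 0. Then for all k ∈ ℝ and λ ∈ ℂ, det(Û(k) − λ·I₄) = (λ − λ₁(k))·(λ − λ₂(k))·(λ + 2·s0²·s1²·cos k)², where λ₁(k) = s0²·((1 + s1²)·cos k − i·c1·√(1 + 3·s1²)·sin k) and λ₂(k) = s0²·((1 + s1²)·cos k + i·c1·√(1 + 3·s1²)·sin k). In particular the eigenvalues of Û(k) are λ₁(k), λ₂(k) and the double eigenvalue −2·s0²·s1²·cos k. -/
import Mathlib


open Matrix Complex

/-- The matrix `A` built from `P(θ0,θ1)`. -/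
noncomputable def Amat (θ0 θ1 : ℝ) : Matrix (Fin 4) (Fin 4) ℂ :=
  !![0, 0, 0, (Real.cos θ0 : ℂ);
     0, (-((Real.sin θ0 * Real.cos θ1 : ℝ) : ℂ)), ((Real.sin θ0 * Real.sin θ1 : ℝ) : ℂ), 0;
     ((Real.sin θ0 * Real.sin θ1 : ℝ) : ℂ), 0, 0, (-((Real.sin θ0 * Real.cos θ1 : ℝ) : ℂ));
     0, (Real.cos θ0 : ℂ), 0, 0]

/-- The matrix `B` built from `Q(θ0,θ1)`. -/
noncomputable def Bmat (θ0 θ1 : ℝ) : Matrix (Fin 4) (Fin 4) ℂ :=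
  !![((Real.sin θ0 * Real.cos θ1 : ℝ) : ℂ), 0, 0, ((Real.sin θ0 * Real.sin θ1 : ℝ) : ℂ);
     0, 0, (Real.cos θ0 : ℂ), 0;
     (Real.cos θ0 : ℂ), 0, 0, 0;
     0, ((Real.sin θ0 * Real.sin θ1 : ℝ) : ℂ), ((Real.sin θ0 * Real.cos θ1 : ℝ) : ℂ), 0]

/-- The Fourier-space evolution operator `Û(k) = e^{ik} A² + e^{-ik} B²`. -/
noncomputable def Uhat (θ0 θ1 k : ℝ) : Matrix (Fin 4) (Fin 4) ℂ :=
  Complex.exp (Complex.I * (k : ℂ)) • (Amat θ0 θ1 ^ 2)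
    + Complex.exp (-(Complex.I * (k : ℂ))) • (Bmat θ0 θ1 ^ 2)

lemma my_det_fin_four (M : Matrix (Fin 4) (Fin 4) ℂ) : M.det =
    M 0 0 * (M 1 1 * (M 2 2 * M 3 3 - M 2 3 * M 3 2) - M 1 2 * (M 2 1 * M 3 3 - M 2 3 * M 3 1)
      + M 1 3 * (M 2 1 * M 3 2 - M 2 2 * M 3 1))
  - M 0 1 * (M 1 0 * (M 2 2 * M 3 3 - M 2 3 * M 3 2) - M 1 2 * (M 2 0 * M 3 3 - M 2 3 * M 3 0)
      + M 1 3 * (M 2 0 * M 3 2 - M 2 2 * M 3 0))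
  + M 0 2 * (M 1 0 * (M 2 1 * M 3 3 - M 2 3 * M 3 1) - M 1 1 * (M 2 0 * M 3 3 - M 2 3 * M 3 0)
      + M 1 3 * (M 2 0 * M 3 1 - M 2 1 * M 3 0))
  - M 0 3 * (M 1 0 * (M 2 1 * M 3 2 - M 2 2 * M 3 1) - M 1 1 * (M 2 0 * M 3 2 - M 2 2 * M 3 0)
      + M 1 2 * (M 2 0 * M 3 1 - M 2 1 * M 3 0)) := by
  rw [Matrix.det_succ_row_zero]
  simp [Fin.sum_univ_succ, Matrix.det_fin_three, Matrix.submatrix_apply, Fin.succAbove,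
    show (Fin.succ 2 : Fin 4) = 3 from rfl, show (Fin.succ 1 : Fin 4) = 2 from rfl,
    show (Fin.succ 0 : Fin 4) = 1 from rfl, show ((Fin.castSucc 2) : Fin 4) = 2 from rfl,
    show ((Fin.castSucc 1) : Fin 4) = 1 from rfl, show ((Fin.castSucc 0) : Fin 4) = 0 from rfl]
  ring

set_option maxHeartbeats 1000000 in
lemma det_algebra (a b d s r C S L : ℂ) (hc : a = b * s)
    (h1 : d^2 = 1 - s^2) (h2 : r^2 = 1 + 3*s^2) :
    (!![((-1)*L + (-1)*b^2*d^2*S*Complex.I + b^2*d^2*C), ((-1)*b^2*s^2*S*Complex.I + b^2*s^2*C + a^2*S*Complex.I + a^2*C), ((-1)*b^2*s*d*S*Complex.I + b^2*s*d*C), ((-1)*b^2*s*d*S*Complex.I + b^2*s*d*C);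
     (b^2*s^2*S*Complex.I + b^2*s^2*C + (-1)*a^2*S*Complex.I + a^2*C), ((-1)*L + b^2*d^2*S*Complex.I + b^2*d^2*C), ((-1)*b^2*s*d*S*Complex.I + (-1)*b^2*s*d*C), ((-1)*b^2*s*d*S*Complex.I + (-1)*b^2*s*d*C);
     ((-1)*a*b*d*S*Complex.I + a*b*d*C), ((-1)*a*b*d*S*Complex.I + (-1)*a*b*d*C), ((-1)*L), ((2)*a*b*s*C);
     ((-1)*a*b*d*S*Complex.I + a*b*d*C), ((-1)*a*b*d*S*Complex.I + (-1)*a*b*d*C), ((2)*a*b*s*C), ((-1)*L)] : Matrix (Fin 4) (Fin 4) ℂ).det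
    = (L - b^2*((1+s^2)*C - Complex.I*(d*r*S))) * (L - b^2*((1+s^2)*C + Complex.I*(d*r*S)))
      * (L + 2*b^2*s^2*C)^2 := by
  have hI : (Complex.I)^2 = -1 := Complex.I_sq
  rw [my_det_fin_four]
  simp only [Matrix.cons_val', Matrix.cons_val_zero, Matrix.cons_val_one, Matrix.head_cons,
    Matrix.empty_val', Matrix.cons_val_fin_one, Matrix.head_fin_const,
    Matrix.cons_val_two, Matrix.tail_cons, Matrix.cons_val_three, Matrix.of_apply]
  linear_combination ((-4)*b^3*s*d^2*S^2*L^2*Complex.I^2 + (-4)*b^3*s*d^2*C^2*L^2 + (-1)*b^3*s^3*S^2*L^2*Complex.I^2 + (-7)*b^3*s^3*C^2*L^2 + (-4)*b^5*s*d^4*C*S^2*L*Complex.I^2 + (4)*b^5*s*d^4*C^3*L + (-16)*b^5*s^3*d^2*C*S^2*L*Complex.I^2 + (8)*b^5*s^3*d^2*C^3*L + (-4)*b^7*s^3*d^4*C^2*S^2*Complex.I^2 + (4)*b^7*s^3*d^4*C^4 + (-16)*b^7*s^5*d^2*C^2*S^2*Complex.I^2 + (16)*b^7*s^5*d^2*C^4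 + (16)*b^7*s^7*C^4 + (-1)*a*b^2*s^2*S^2*L^2*Complex.I^2 + (-7)*a*b^2*s^2*C^2*L^2 + (-12)*a*b^4*s^2*d^2*C*S^2*L*Complex.I^2 + (4)*a*b^4*s^2*d^2*C^3*L + (-4)*a*b^6*s^2*d^4*C^2*S^2*Complex.I^2 + (4)*a*b^6*s^2*d^4*C^4 + (-16)*a*b^6*s^4*d^2*C^2*S^2*Complex.I^2 + (16)*a*b^6*s^4*d^2*C^4 + (16)*a*b^6*s^6*C^4 + a^2*b*s*S^2*L^2*Complex.I^2 + (-1)*a^2*b*s*C^2*L^2 + (-4)*a^2*b^3*s*d^2*C*S^2*L*Complex.I^2 + (4)*a^2*b^3*s*d^2*C^3*L + (-8)*a^2*b^5*s^3*d^2*C^2*S^2*Complex.I^2 + (8)*a^2*b^5*s^3*d^2*C^4 + (4)*a^2*b^5*s^5*C^2*S^2*Complex.I^2 + (12)*a^2*b^5*s^5*C^4 + a^3*S^2*L^2*Complex.I^2 + (-1)*a^3*C^2*L^2 + (-8)*a^3*b^4*s^2*d^2*C^2*S^2*Complex.I^2 + (8)*a^3*b^4*s^2*d^2*C^4 + (4)*a^3*b^4*s^4*C^2*S^2*Complex.I^2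 + (12)*a^3*b^4*s^4*C^4 + (-4)*a^4*b^3*s^3*C^2*S^2*Complex.I^2 + (4)*a^4*b^3*s^3*C^4 + (-4)*a^5*b^2*s^2*C^2*S^2*Complex.I^2 + (4)*a^5*b^2*s^2*C^4) * hc + (b^4*d^2*r^2*S^2*L^2 + (-1)*b^4*d^4*S^2*L^2 + (-4)*b^4*s^2*d^2*S^2*L^2 + (4)*b^6*s^2*d^2*r^2*C*S^2*L + (-4)*b^6*s^2*d^4*C*S^2*L + (-16)*b^6*s^4*d^2*C*S^2*L + (4)*b^8*s^4*d^2*r^2*C^2*S^2 + (-4)*b^8*s^4*d^4*C^2*S^2 + (-16)*b^8*s^6*d^2*C^2*S^2) * hI + ((-2)*b^2*C*L^3 + b^4*S^2*L^2 + b^4*C^2*L^2 + (-1)*b^4*r^2*S^2*L^2 + b^4*d^2*S^2*L^2 + b^4*d^2*C^2*L^2 + (3)*b^4*s^2*S^2*L^2 + (-5)*b^4*s^2*C^2*L^2 + (4)*b^6*s^2*C*S^2*L + (4)*b^6*s^2*C^3*L + (-4)*b^6*s^2*r^2*C*S^2*L + (4)*b^6*s^2*d^2*C*S^2*L + (4)*b^6*s^2*d^2*C^3*L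 + (12)*b^6*s^4*C*S^2*L + (4)*b^6*s^4*C^3*L + (4)*b^8*s^4*C^2*S^2 + (4)*b^8*s^4*C^4 + (-4)*b^8*s^4*r^2*C^2*S^2 + (4)*b^8*s^4*d^2*C^2*S^2 + (4)*b^8*s^4*d^2*C^4 + (12)*b^8*s^6*C^2*S^2 + (12)*b^8*s^6*C^4) * h1 + ((-1)*b^4*S^2*L^2 + b^4*s^2*S^2*L^2 + (-4)*b^6*s^2*C*S^2*L + (4)*b^6*s^4*C*S^2*L + (-4)*b^8*s^4*C^2*S^2 + (4)*b^8*s^6*C^2*S^2) * h2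

lemma mem_spec_of_det (M : Matrix (Fin 4) (Fin 4) ℂ) (μ : ℂ)
    (hd : (M - μ • (1 : Matrix (Fin 4) (Fin 4) ℂ)).det = 0) : μ ∈ spectrum ℂ M := by
  rw [spectrum.mem_iff]
  intro hu
  rw [Matrix.isUnit_iff_isUnit_det] at hu
  have heq : algebraMap ℂ (Matrix (Fin 4) (Fin 4) ℂ) μ - M
      = -(M - μ • (1 : Matrix (Fin 4) (Fin 4) ℂ)) := by
    rw [Algebra.algebraMap_eq_smul_one, neg_sub]
  rw [heq, Matrix.det_neg, hd] at hu
  simp at hu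

set_option maxHeartbeats 1000000 in
theorem Uhat_charpoly_factorization_ballistic (θ0 θ1 : ℝ) (c0 s0 c1 s1 : ℝ)
    (hc0 : c0 = Real.cos θ0) (hs0 : s0 = Real.sin θ0)
    (hc1 : c1 = Real.cos θ1) (hs1 : s1 = Real.sin θ1)
    (h : c0 = s0 * s1) (hs1ne : s1 ≠ 0) :
    ∀ (k : ℝ) (lam : ℂ),
      (Uhat θ0 θ1 k - lam • (1 : Matrix (Fin 4) (Fin 4) ℂ)).det =
        (lam - ((s0 ^ 2 : ℝ) : ℂ) *
            (((1 + s1 ^ 2) * Real.cos k : ℝ) -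
              Complex.I * ((c1 * Real.sqrt (1 + 3 * s1 ^ 2) * Real.sin k : ℝ) : ℂ))) *
        (lam - ((s0 ^ 2 : ℝ) : ℂ) *
            (((1 + s1 ^ 2) * Real.cos k : ℝ) +
              Complex.I * ((c1 * Real.sqrt (1 + 3 * s1 ^ 2) * Real.sin k : ℝ) : ℂ))) *
        (lam + ((2 * s0 ^ 2 * s1 ^ 2 * Real.cos k : ℝ) : ℂ)) ^ 2 ∧
      (((s0 ^ 2 : ℝ) : ℂ) *
          (((1 + s1 ^ 2) * Real.cos k : ℝ) -
            Complex.I * ((c1 * Real.sqrt (1 + 3 * s1 ^ 2) * Real.sin k : ℝ) : ℂ))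
        ∈ spectrum ℂ (Uhat θ0 θ1 k)) ∧
      (((s0 ^ 2 : ℝ) : ℂ) *
          (((1 + s1 ^ 2) * Real.cos k : ℝ) +
            Complex.I * ((c1 * Real.sqrt (1 + 3 * s1 ^ 2) * Real.sin k : ℝ) : ℂ))
        ∈ spectrum ℂ (Uhat θ0 θ1 k)) ∧
      ((-(2 * s0 ^ 2 * s1 ^ 2 * Real.cos k : ℝ) : ℂ) ∈ spectrum ℂ (Uhat θ0 θ1 k)) := by
  subst hc0 hs0 hc1 hs1
  intro k lam
  have hc : (Real.cos θ0 : ℂ) = (Real.sin θ0 : ℂ) * (Real.sin θ1 : ℂ) := by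
    exact_mod_cast congrArg Complex.ofReal h
  have h1 : (Real.cos θ1 : ℂ) ^ 2 = 1 - (Real.sin θ1 : ℂ) ^ 2 := by
    have h0 := Real.sin_sq_add_cos_sq θ1
    have h0' : Real.cos θ1 ^ 2 = 1 - Real.sin θ1 ^ 2 := by linarith
    exact_mod_cast congrArg Complex.ofReal h0'
  have h2 : ((Real.sqrt (1 + 3 * Real.sin θ1 ^ 2) : ℝ) : ℂ) ^ 2
      = 1 + 3 * (Real.sin θ1 : ℂ) ^ 2 := by
    have h0 : Real.sqrt (1 + 3 * Real.sin θ1 ^ 2) ^ 2 = 1 + 3 * Real.sin θ1 ^ 2 :=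
      Real.sq_sqrt (by positivity)
    exact_mod_cast congrArg Complex.ofReal h0
  have he : Complex.exp (Complex.I * (k : ℂ))
      = ((Real.cos k : ℝ) : ℂ) + ((Real.sin k : ℝ) : ℂ) * Complex.I := by
    rw [mul_comm, Complex.exp_mul_I, Complex.ofReal_cos, Complex.ofReal_sin]
  have he' : Complex.exp (-(Complex.I * (k : ℂ)))
      = ((Real.cos k : ℝ) : ℂ) - ((Real.sin k : ℝ) : ℂ) * Complex.I := by
    rw [show -(Complex.I * (k : ℂ)) = ((-k : ℝ) : ℂ) * Complex.I by push_cast; ring,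
      Complex.exp_mul_I, Complex.ofReal_cos, Complex.ofReal_sin]
    push_cast
    simp [Complex.cos_neg, Complex.sin_neg]
    ring
  have key : ∀ μ : ℂ,
      (Uhat θ0 θ1 k - μ • (1 : Matrix (Fin 4) (Fin 4) ℂ)).det =
        (μ - ((Real.sin θ0 : ℂ))^2 *
            ((1 + ((Real.sin θ1 : ℂ))^2) * ((Real.cos k : ℝ) : ℂ) -
              Complex.I * ((Real.cos θ1 : ℂ) * ((Real.sqrt (1 + 3 * Real.sin θ1 ^ 2) : ℝ) : ℂ)
                * ((Real.sin k : ℝ) : ℂ)))) *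
        (μ - ((Real.sin θ0 : ℂ))^2 *
            ((1 + ((Real.sin θ1 : ℂ))^2) * ((Real.cos k : ℝ) : ℂ) +
              Complex.I * ((Real.cos θ1 : ℂ) * ((Real.sqrt (1 + 3 * Real.sin θ1 ^ 2) : ℝ) : ℂ)
                * ((Real.sin k : ℝ) : ℂ)))) *
        (μ + 2 * ((Real.sin θ0 : ℂ))^2 * ((Real.sin θ1 : ℂ))^2 * ((Real.cos k : ℝ) : ℂ))^2 := by
    intro μ
    have hmat : Uhat θ0 θ1 k - μ • (1 : Matrix (Fin 4) (Fin 4) ℂ)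
        = (!![((-1)*μ + (-1)*(Real.sin θ0 : ℂ)^2*(Real.cos θ1 : ℂ)^2*((Real.sin k : ℝ) : ℂ)*Complex.I + (Real.sin θ0 : ℂ)^2*(Real.cos θ1 : ℂ)^2*((Real.cos k : ℝ) : ℂ)), ((-1)*(Real.sin θ0 : ℂ)^2*(Real.sin θ1 : ℂ)^2*((Real.sin k : ℝ) : ℂ)*Complex.I + (Real.sin θ0 : ℂ)^2*(Real.sin θ1 : ℂ)^2*((Real.cos k : ℝ) : ℂ) + (Real.cos θ0 : ℂ)^2*((Real.sin k : ℝ) : ℂ)*Complex.I + (Real.cos θ0 : ℂ)^2*((Real.cos k : ℝ) : ℂ)), ((-1)*(Real.sin θ0 : ℂ)^2*(Real.sin θ1 : ℂ)*(Real.cos θ1 : ℂ)*((Real.sin k : ℝ) : ℂ)*Complex.I + (Real.sin θ0 : ℂ)^2*(Real.sin θ1 : ℂ)*(Real.cos θ1 : ℂ)*((Real.cos k : ℝ) : ℂ)), ((-1)*(Real.sin θ0 : ℂ)^2*(Real.sin θ1 : ℂ)*(Real.cos θ1 : ℂ)*((Real.sin k : ℝ) : ℂ)*Complex.I + (Real.sin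 θ0 : ℂ)^2*(Real.sin θ1 : ℂ)*(Real.cos θ1 : ℂ)*((Real.cos k : ℝ) : ℂ));
     ((Real.sin θ0 : ℂ)^2*(Real.sin θ1 : ℂ)^2*((Real.sin k : ℝ) : ℂ)*Complex.I + (Real.sin θ0 : ℂ)^2*(Real.sin θ1 : ℂ)^2*((Real.cos k : ℝ) : ℂ) + (-1)*(Real.cos θ0 : ℂ)^2*((Real.sin k : ℝ) : ℂ)*Complex.I + (Real.cos θ0 : ℂ)^2*((Real.cos k : ℝ) : ℂ)), ((-1)*μ + (Real.sin θ0 : ℂ)^2*(Real.cos θ1 : ℂ)^2*((Real.sin k : ℝ) : ℂ)*Complex.I + (Real.sin θ0 : ℂ)^2*(Real.cos θ1 : ℂ)^2*((Real.cos k : ℝ) : ℂ)), ((-1)*(Real.sin θ0 : ℂ)^2*(Real.sin θ1 : ℂ)*(Real.cos θ1 : ℂ)*((Real.sin k : ℝ) : ℂ)*Complex.I + (-1)*(Real.sin θ0 : ℂ)^2*(Real.sin θ1 : ℂ)*(Real.cos θ1 : ℂ)*((Real.cos k : ℝ) : ℂ)), ((-1)*(Real.sin θ0 : ℂ)^2*(Real.sin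 θ1 : ℂ)*(Real.cos θ1 : ℂ)*((Real.sin k : ℝ) : ℂ)*Complex.I + (-1)*(Real.sin θ0 : ℂ)^2*(Real.sin θ1 : ℂ)*(Real.cos θ1 : ℂ)*((Real.cos k : ℝ) : ℂ));
     ((-1)*(Real.cos θ0 : ℂ)*(Real.sin θ0 : ℂ)*(Real.cos θ1 : ℂ)*((Real.sin k : ℝ) : ℂ)*Complex.I + (Real.cos θ0 : ℂ)*(Real.sin θ0 : ℂ)*(Real.cos θ1 : ℂ)*((Real.cos k : ℝ) : ℂ)), ((-1)*(Real.cos θ0 : ℂ)*(Real.sin θ0 : ℂ)*(Real.cos θ1 : ℂ)*((Real.sin k : ℝ) : ℂ)*Complex.I + (-1)*(Real.cos θ0 : ℂ)*(Real.sin θ0 : ℂ)*(Real.cos θ1 : ℂ)*((Real.cos k : ℝ) : ℂ)), ((-1)*μ), ((2)*(Real.cos θ0 : ℂ)*(Real.sin θ0 : ℂ)*(Real.sin θ1 : ℂ)*((Real.cos k : ℝ) : ℂ));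
     ((-1)*(Real.cos θ0 : ℂ)*(Real.sin θ0 : ℂ)*(Real.cos θ1 : ℂ)*((Real.sin k : ℝ) : ℂ)*Complex.I + (Real.cos θ0 : ℂ)*(Real.sin θ0 : ℂ)*(Real.cos θ1 : ℂ)*((Real.cos k : ℝ) : ℂ)), ((-1)*(Real.cos θ0 : ℂ)*(Real.sin θ0 : ℂ)*(Real.cos θ1 : ℂ)*((Real.sin k : ℝ) : ℂ)*Complex.I + (-1)*(Real.cos θ0 : ℂ)*(Real.sin θ0 : ℂ)*(Real.cos θ1 : ℂ)*((Real.cos k : ℝ) : ℂ)), ((2)*(Real.cos θ0 : ℂ)*(Real.sin θ0 : ℂ)*(Real.sin θ1 : ℂ)*((Real.cos k : ℝ) : ℂ)), ((-1)*μ)] : Matrix (Fin 4) (Fin 4) ℂ) := by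
      ext i j
      fin_cases i <;> fin_cases j <;>
        simp only [Uhat, Amat, Bmat, pow_two, Matrix.mul_apply, Fin.sum_univ_four,
            Matrix.sub_apply, Matrix.add_apply, Matrix.smul_apply, Matrix.one_apply, he, he',
            Matrix.cons_val', Matrix.cons_val_zero, Matrix.cons_val_one, Matrix.head_cons,
            Matrix.empty_val', Matrix.cons_val_fin_one, Matrix.head_fin_const,
            Matrix.cons_val_two, Matrix.tail_cons, Matrix.cons_val_three, Matrix.of_apply,
            smul_eq_mul, Fin.isValue] <;>
        norm_num <;> push_cast <;> ring
    rw [hmat,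
      det_algebra (Real.cos θ0 : ℂ) (Real.sin θ0 : ℂ) (Real.cos θ1 : ℂ) (Real.sin θ1 : ℂ)
        ((Real.sqrt (1 + 3 * Real.sin θ1 ^ 2) : ℝ) : ℂ) ((Real.cos k : ℝ) : ℂ)
        ((Real.sin k : ℝ) : ℂ) μ hc h1 h2]
  constructor
  · rw [key lam]
    push_cast
    ring
  refine ⟨mem_spec_of_det _ _ ?_, mem_spec_of_det _ _ ?_, mem_spec_of_det _ _ ?_⟩ <;>
    · rw [key]
      push_cast
      ring
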